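/- Let (φ_k)_{0≤k≤N} be the orthogonal polynomials of an irreducible birth-and-death chain on {0,…,N}, defined by φ_0 = 1 and φ_k(t) = (1/(p_0⋯p_{k-1})) det(t I_k - P_{k-1}), where P_{k-1} is the restriction of the transition matrix P to {0,…,k-1}. If 1 = λ_0 > λ_1 > … > λ_N are the eigenvalues of P, then (-1)^k φ_N(λ_k) > 0 for all 0 ≤ k ≤ N. -/

import Mathlib

open Matrix Finset

private lemma conj_det19 {n : Type*} [Fintype n] [DecidableEq n] (M : Matrix n n ℝ)
    (d : n → ℝ) (hd : ∀ i, d i ≠ 0) (t : ℝ) :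
    (t • (1 : Matrix n n ℝ) - Matrix.of (fun i j => (d i)⁻¹ * M i j * d j)).det
      = (t • (1 : Matrix n n ℝ) - M).det := by
  have hEMD : Matrix.of (fun i j => (d i)⁻¹ * M i j * d j)
      = diagonal (fun i => (d i)⁻¹) * M * diagonal d := by
    ext i j
    simp [Matrix.mul_diagonal, Matrix.diagonal_mul, mul_assoc]
  have hED : diagonal (fun i => (d i)⁻¹) * diagonal d = (1 : Matrix n n ℝ) := by
    rw [diagonal_mul_diagonal]
    ext i j
    rcases eq_or_ne i j with rfl | h
    · simp [inv_mul_cancel₀ (hd i)]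
    · simp [h]
  have key : t • (1 : Matrix n n ℝ) - diagonal (fun i => (d i)⁻¹) * M * diagonal d
      = diagonal (fun i => (d i)⁻¹) * (t • (1 : Matrix n n ℝ) - M) * diagonal d := by
    rw [Matrix.mul_sub, Matrix.sub_mul]
    congr 1
    rw [Matrix.mul_smul, Matrix.smul_mul, mul_one, hED]
  have hprod : (∏ i, (d i)⁻¹) * (∏ i, d i) = 1 := by
    rw [← Finset.prod_mul_distrib]
    exact Finset.prod_eq_one fun i _ => inv_mul_cancel₀ (hd i)
  rw [hEMD, key, det_mul, det_mul, det_diagonal, det_diagonal, mul_right_comm, hprod, one_mul]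

private noncomputable def ddAux19 (f : ℕ → ℝ) : ℕ → ℝ
  | 0 => 1
  | n + 1 => ddAux19 f n * Real.sqrt (f n)

private lemma ddAux19_pos (f : ℕ → ℝ) (hf : ∀ n, 0 < f n) : ∀ n, 0 < ddAux19 f n
  | 0 => one_pos
  | n + 1 => mul_pos (ddAux19_pos f hf n) (Real.sqrt_pos.mpr (hf n))

private lemma det_eq_zero_of_mem_spectrum19 {n : Type*} [Fintype n] [DecidableEq n]
    {M : Matrix n n ℝ} {μ : ℝ} (h : μ ∈ spectrum ℝ M) :
    (μ • (1 : Matrix n n ℝ) - M).det = 0 := by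
  rw [spectrum.mem_iff, Algebra.algebraMap_eq_smul_one] at h
  by_contra hdet
  exact h ((Matrix.isUnit_iff_isUnit_det _).mpr (isUnit_iff_ne_zero.mpr hdet))

private lemma adjugate_conj19 {n : Type*} [Fintype n] [DecidableEq n]
    (U M : Matrix n n ℝ) (hU : U * star U = 1) (hU' : star U * U = 1) :
    (U * M * star U).adjugate = U * M.adjugate * star U := by
  have hadjU : U.adjugate = U.det • star U := by
    calc U.adjugate = U.adjugate * (U * star U) := by rw [hU, mul_one]
    _ = (U.adjugate * U) * star U := by rw [mul_assoc]
    _ = U.det • star U := by rw [Matrix.adjugate_mul, Matrix.smul_mul, one_mul]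
  have hadjU' : (star U).adjugate = (star U).det • U := by
    calc (star U).adjugate = (star U).adjugate * (star U * U) := by rw [hU', mul_one]
    _ = ((star U).adjugate * star U) * U := by rw [mul_assoc]
    _ = (star U).det • U := by rw [Matrix.adjugate_mul, Matrix.smul_mul, one_mul]
  have hdet : (star U).det * U.det = 1 := by
    rw [← Matrix.det_mul, hU', Matrix.det_one]
  rw [Matrix.adjugate_mul_distrib, Matrix.adjugate_mul_distrib, hadjU, hadjU',
    Matrix.smul_mul, Matrix.mul_smul, Matrix.mul_smul, smul_smul, hdet, one_smul,
    mul_assoc]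

theorem stmt19 (N : ℕ) (P : Matrix (Fin (N + 1)) (Fin (N + 1)) ℝ)
    (hP0 : ∀ x y, 0 ≤ P x y) (hP1 : ∀ x, ∑ y, P x y = 1)
    (htri : ∀ x y : Fin (N + 1), 1 < ((x : ℤ) - (y : ℤ)).natAbs → P x y = 0)
    (hp : ∀ i : Fin N, 0 < P i.castSucc i.succ)
    (hq : ∀ i : Fin N, 0 < P i.succ i.castSucc)
    (lam : Fin (N + 1) → ℝ)
    (hlam0 : lam 0 = 1)
    (hanti : StrictAnti lam)
    (heig : ∀ k, lam k ∈ spectrum ℝ P)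
    (hall : ∀ μ ∈ spectrum ℝ P, ∃ k, lam k = μ)
    (φN : ℝ → ℝ)
    (hφ : ∀ t : ℝ, φN t = (∏ i : Fin N, P i.castSucc i.succ)⁻¹
        * (t • (1 : Matrix (Fin N) (Fin N) ℝ)
            - P.submatrix Fin.castSucc Fin.castSucc).det) :
    ∀ k : Fin (N + 1), 0 < (-1 : ℝ) ^ (k : ℕ) * φN (lam k) := by
  intro k
  classical
  set f : ℕ → ℝ := fun n => if h : n < N then
      P (Fin.succ ⟨n, h⟩) (Fin.castSucc ⟨n, h⟩) / P (Fin.castSucc ⟨n, h⟩) (Fin.succ ⟨n, h⟩)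
    else 1 with hf
  have hfpos : ∀ n, 0 < f n := by
    intro n
    by_cases h : n < N
    · simp only [hf, dif_pos h]
      exact div_pos (hq _) (hp _)
    · simp only [hf, dif_neg h]
      exact one_pos
  set d : Fin (N + 1) → ℝ := fun i => ddAux19 f (i : ℕ) with hd
  have hdpos : ∀ i, 0 < d i := fun i => ddAux19_pos f hfpos _
  have hdne : ∀ i, d i ≠ 0 := fun i => (hdpos i).ne'
  have hdsucc : ∀ i : Fin N, d i.succ
      = d i.castSucc * Real.sqrt (P i.succ i.castSucc / P i.castSucc i.succ) := by
    intro i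
    show ddAux19 f ((i : ℕ) + 1) = ddAux19 f (i : ℕ) * _
    have hfi : f (i : ℕ) = P i.succ i.castSucc / P i.castSucc i.succ := by
      rw [hf]
      exact dif_pos i.isLt
    rw [ddAux19, hfi]
  set J : Matrix (Fin (N + 1)) (Fin (N + 1)) ℝ :=
    Matrix.of (fun i j => (d i)⁻¹ * P i j * d j) with hJ
  have hadjpair : ∀ i j : Fin (N + 1), (j : ℕ) = (i : ℕ) + 1 →
      ∃ i' : Fin N, i = i'.castSucc ∧ j = i'.succ := by
    intro i j hij
    have hj := j.isLt
    have hiN : (i : ℕ) < N := by omega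
    exact ⟨⟨i, hiN⟩, Fin.ext (by simp), Fin.ext (by simp [hij])⟩
  have hstep : ∀ i' : Fin N,
      (d i'.castSucc)⁻¹ * P i'.castSucc i'.succ * d i'.succ
        = (d i'.succ)⁻¹ * P i'.succ i'.castSucc * d i'.castSucc := by
    intro i'
    have hqp : 0 < P i'.succ i'.castSucc / P i'.castSucc i'.succ := div_pos (hq i') (hp i')
    have hspos : 0 < Real.sqrt (P i'.succ i'.castSucc / P i'.castSucc i'.succ) :=
      Real.sqrt_pos.mpr hqp
    have hss : Real.sqrt (P i'.succ i'.castSucc / P i'.castSucc i'.succ)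
        * Real.sqrt (P i'.succ i'.castSucc / P i'.castSucc i'.succ)
        = P i'.succ i'.castSucc / P i'.castSucc i'.succ := Real.mul_self_sqrt hqp.le
    have key : P i'.castSucc i'.succ
        * (Real.sqrt (P i'.succ i'.castSucc / P i'.castSucc i'.succ)
          * Real.sqrt (P i'.succ i'.castSucc / P i'.castSucc i'.succ))
        = P i'.succ i'.castSucc := by
      rw [hss]
      rw [mul_comm]
      exact div_mul_cancel₀ _ (hp i').ne'
    rw [hdsucc i']
    have hc := hdne i'.castSucc
    field_simp
    linear_combination key
  have hsymm : ∀ i j : Fin (N + 1), J i j = J j i := by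
    have base : ∀ i j : Fin (N + 1), (i : ℕ) < (j : ℕ) → J i j = J j i := by
      intro i j hlt
      by_cases h1 : (j : ℕ) = (i : ℕ) + 1
      · obtain ⟨i', rfl, rfl⟩ := hadjpair i j h1
        show (d _)⁻¹ * P _ _ * d _ = (d _)⁻¹ * P _ _ * d _
        exact hstep i'
      · have hz1 : P i j = 0 := htri i j (by omega)
        have hz2 : P j i = 0 := htri j i (by omega)
        show (d i)⁻¹ * P i j * d j = (d j)⁻¹ * P j i * d i
        rw [hz1, hz2]
        ring
    intro i j
    rcases lt_trichotomy (i : ℕ) (j : ℕ) with h | h | h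
    · exact base i j h
    · rw [Fin.ext h]
    · exact (base j i h).symm
  have hH : J.IsHermitian := by
    ext i j
    rw [Matrix.conjTranspose_apply, star_trivial]
    exact hsymm j i
  set U : Matrix (Fin (N + 1)) (Fin (N + 1)) ℝ := (hH.eigenvectorUnitary : Matrix (Fin (N + 1)) (Fin (N + 1)) ℝ) with hU
  set ev : Fin (N + 1) → ℝ := hH.eigenvalues with hev
  have hUs : U * star U = 1 := Matrix.mem_unitaryGroup_iff.mp hH.eigenvectorUnitary.2
  have hUs' : star U * U = 1 := Matrix.mem_unitaryGroup_iff'.mp hH.eigenvectorUnitary.2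
  have hspec : J = U * diagonal ev * star U := by
    have h := hH.spectral_theorem
    rwa [RCLike.ofReal_real_eq_id, Function.id_comp] at h
  have hdiag : ∀ t : ℝ, t • (1 : Matrix (Fin (N + 1)) (Fin (N + 1)) ℝ) - J
      = U * diagonal (fun i => t - ev i) * star U := by
    intro t
    have h1 : t • (1 : Matrix (Fin (N + 1)) (Fin (N + 1)) ℝ) = U * (t • 1) * star U := by
      rw [Matrix.mul_smul, Matrix.smul_mul, mul_one, hUs]
    have h2 : t • (1 : Matrix (Fin (N + 1)) (Fin (N + 1)) ℝ) - diagonal ev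
        = diagonal (fun i => t - ev i) := by
      ext i j
      rcases eq_or_ne i j with rfl | h
      · simp
      · simp [Matrix.one_apply_ne h, Matrix.diagonal_apply_ne _ h]
    calc t • (1 : Matrix (Fin (N + 1)) (Fin (N + 1)) ℝ) - J
        = U * (t • 1) * star U - U * diagonal ev * star U := by rw [← h1, ← hspec]
      _ = U * (t • (1 : Matrix (Fin (N + 1)) (Fin (N + 1)) ℝ) - diagonal ev) * star U := by
          rw [Matrix.mul_sub, Matrix.sub_mul]
      _ = _ := by rw [h2]
  have hdetJ : ∀ t : ℝ, (t • (1 : Matrix (Fin (N + 1)) (Fin (N + 1)) ℝ) - J).det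
      = ∏ i, (t - ev i) := by
    intro t
    rw [hdiag, det_mul, det_mul, mul_right_comm, ← det_mul, hUs, det_one, one_mul, det_diagonal]
  have hdetP : ∀ t : ℝ, (t • (1 : Matrix (Fin (N + 1)) (Fin (N + 1)) ℝ) - J).det
      = (t • (1 : Matrix (Fin (N + 1)) (Fin (N + 1)) ℝ) - P).det :=
    fun t => conj_det19 P d hdne t
  have hroot : ∀ m : Fin (N + 1), ∃ j, ev j = lam m := by
    intro m
    have h0 := det_eq_zero_of_mem_spectrum19 (heig m)
    rw [← hdetP, hdetJ] at h0
    obtain ⟨j, _, hj⟩ := Finset.prod_eq_zero_iff.mp h0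
    exact ⟨j, (sub_eq_zero.mp hj).symm⟩
  obtain ⟨j0, hj0⟩ := hroot k
  have hms : Multiset.map ev Finset.univ.val = Multiset.map lam Finset.univ.val := by
    have hnd : (Multiset.map lam Finset.univ.val).Nodup :=
      Multiset.Nodup.map hanti.injective Finset.univ.nodup
    have hsub : Multiset.map lam Finset.univ.val ⊆ Multiset.map ev Finset.univ.val := by
      intro x hx
      obtain ⟨m, _, rfl⟩ := Multiset.mem_map.mp hx
      obtain ⟨j, hj⟩ := hroot m
      exact Multiset.mem_map.mpr ⟨j, Finset.mem_val.mpr (Finset.mem_univ j), hj⟩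
    have hle := (Multiset.le_iff_subset hnd).mpr hsub
    exact (Multiset.eq_of_le_of_card_le hle (by simp)).symm
  set g : Fin (N + 1) → ℝ := fun j => ∏ i ∈ Finset.univ.erase j, (lam k - ev i) with hg
  have hgval : g j0 = ∏ j ∈ Finset.univ.erase k, (lam k - lam j) := by
    have h1 : Multiset.map ev (Finset.univ.val.erase j0)
        = Multiset.map lam (Finset.univ.val.erase k) := by
      have e1 : lam k ::ₘ Multiset.map ev (Finset.univ.val.erase j0)
          = Multiset.map ev Finset.univ.val := by
        rw [← hj0, ← Multiset.map_cons,
          Multiset.cons_erase (Finset.mem_val.mpr (Finset.mem_univ j0))]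
      have e2 : lam k ::ₘ Multiset.map lam (Finset.univ.val.erase k)
          = Multiset.map lam Finset.univ.val := by
        rw [← Multiset.map_cons, Multiset.cons_erase (Finset.mem_val.mpr (Finset.mem_univ k))]
      exact (Multiset.cons_inj_right _).mp (e1.trans (hms.trans e2.symm))
    show (∏ i ∈ Finset.univ.erase j0, (lam k - ev i)) = _
    rw [Finset.prod_eq_multiset_prod, Finset.prod_eq_multiset_prod,
      Finset.erase_val, Finset.erase_val,
      show (fun i => lam k - ev i) = (fun x => lam k - x) ∘ ev from rfl,
      show (fun j => lam k - lam j) = (fun x => lam k - x) ∘ lam from rfl,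
      ← Multiset.map_map, ← Multiset.map_map, h1]
  have hgzero : ∀ j, j ≠ j0 → g j = 0 := by
    intro j hjne
    refine Finset.prod_eq_zero (Finset.mem_erase.mpr ⟨Ne.symm hjne, Finset.mem_univ _⟩) ?_
    rw [hj0, sub_self]
  have hsign : 0 < (-1 : ℝ) ^ (k : ℕ) * g j0 := by
    rw [hgval]
    have h1 : ((-1 : ℝ) ^ (k : ℕ))
        = ∏ j ∈ Finset.univ.erase k, (if j < k then (-1 : ℝ) else 1) := by
      rw [Finset.prod_ite, Finset.prod_const, Finset.prod_const, one_pow, mul_one]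
      congr 1
      have he : (Finset.univ.erase k).filter (fun j => j < k) = Finset.Iio k := by
        ext j
        simp only [Finset.mem_filter, Finset.mem_erase, Finset.mem_univ, Finset.mem_Iio,
          true_and, and_true]
        exact ⟨fun h => h.2, fun h => ⟨h.ne, h⟩⟩
      rw [he, Fin.card_Iio]
    rw [h1, ← Finset.prod_mul_distrib]
    apply Finset.prod_pos
    intro j hj
    have hjk : j ≠ k := (Finset.mem_erase.mp hj).1
    rcases lt_or_gt_of_ne hjk with h | h
    · rw [if_pos h]
      have := hanti h
      nlinarith
    · rw [if_neg (not_lt.mpr h.le)]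
      have := hanti h
      nlinarith
  -- the adjugate of lam k • 1 - J
  set M : Matrix (Fin (N + 1)) (Fin (N + 1)) ℝ := lam k • 1 - J with hM
  have hadjM : M.adjugate = U * diagonal g * star U := by
    rw [hM, hdiag (lam k), adjugate_conj19 _ _ hUs hUs', Matrix.adjugate_diagonal]
  have hentry : ∀ a b, M.adjugate a b = U a j0 * g j0 * U b j0 := by
    intro a b
    rw [hadjM, Matrix.mul_apply]
    rw [Finset.sum_eq_single j0 (fun x _ hx => by
      rw [Matrix.mul_diagonal, hgzero x hx, mul_zero, zero_mul])
      (fun h => absurd (Finset.mem_univ _) h)]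
    rw [Matrix.mul_diagonal, Matrix.star_apply, star_trivial]
  have hsubM : M.submatrix Fin.castSucc Fin.castSucc
      = lam k • (1 : Matrix (Fin N) (Fin N) ℝ) - J.submatrix Fin.castSucc Fin.castSucc := by
    ext i j
    rcases eq_or_ne i j with rfl | h
    · simp [hM]
    · simp [hM, Matrix.one_apply_ne h, Matrix.one_apply_ne ((Fin.castSucc_injective N).ne h)]
  have hlastlast : M.adjugate (Fin.last N) (Fin.last N)
      = (lam k • (1 : Matrix (Fin N) (Fin N) ℝ) - J.submatrix Fin.castSucc Fin.castSucc).det := by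
    rw [Matrix.adjugate_apply, Matrix.det_succ_row _ (Fin.last N)]
    rw [Finset.sum_eq_single (Fin.last N) (fun x _ hx => by
      rw [Matrix.updateRow_self, Pi.single_eq_of_ne hx, mul_zero, zero_mul])
      (fun h => absurd (Finset.mem_univ _) h)]
    rw [Matrix.updateRow_self, Pi.single_eq_same, Fin.succAbove_last]
    have heven : (-1 : ℝ) ^ ((Fin.last N : ℕ) + (Fin.last N : ℕ)) = 1 :=
      Even.neg_one_pow ⟨(Fin.last N : ℕ), rfl⟩
    rw [heven, one_mul, one_mul, ← hsubM]
    congr 1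
    ext i j
    simp [Matrix.updateRow_ne (Fin.castSucc_lt_last i).ne]
  have htriM : ((M.submatrix Fin.succ Fin.castSucc)).BlockTriangular id := by
    intro i j hij
    have hv : (j : ℕ) < (i : ℕ) := hij
    have h1 : (1 : Matrix (Fin (N + 1)) (Fin (N + 1)) ℝ) i.succ j.castSucc = 0 := by
      apply Matrix.one_apply_ne
      simp only [ne_eq, Fin.ext_iff, Fin.val_succ, Fin.coe_castSucc]
      omega
    have h2 : P i.succ j.castSucc = 0 := by
      apply htri
      simp only [Fin.val_succ, Fin.coe_castSucc]
      omega
    simp [hM, hJ, h1, h2]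
  have hdiagM : ∀ i : Fin N, (M.submatrix Fin.succ Fin.castSucc) i i ≠ 0 := by
    intro i
    have h1 : (1 : Matrix (Fin (N + 1)) (Fin (N + 1)) ℝ) i.succ i.castSucc = 0 := by
      apply Matrix.one_apply_ne
      simp only [ne_eq, Fin.ext_iff, Fin.val_succ, Fin.coe_castSucc]
      omega
    have he : (M.submatrix Fin.succ Fin.castSucc) i i
        = -((d i.succ)⁻¹ * P i.succ i.castSucc * d i.castSucc) := by
      simp [hM, hJ, h1]
    rw [he]
    exact neg_ne_zero.mpr
      (mul_pos (mul_pos (inv_pos.mpr (hdpos i.succ)) (hq i)) (hdpos i.castSucc)).ne'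
  have hlowdet : (M.submatrix Fin.succ Fin.castSucc).det ≠ 0 := by
    rw [Matrix.det_of_upperTriangular htriM]
    exact Finset.prod_ne_zero_iff.mpr (fun i _ => hdiagM i)
  have hadj0 : M.adjugate (Fin.last N) 0 ≠ 0 := by
    rw [Matrix.adjugate_apply, Matrix.det_succ_row_zero]
    rw [Finset.sum_eq_single (Fin.last N) (fun x _ hx => by
      rw [Matrix.updateRow_self, Pi.single_eq_of_ne hx, mul_zero, zero_mul])
      (fun h => absurd (Finset.mem_univ _) h)]
    rw [Matrix.updateRow_self, Pi.single_eq_same, mul_one, Fin.succAbove_last]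
    have hsub : (M.updateRow 0 (Pi.single (Fin.last N) 1)).submatrix Fin.succ Fin.castSucc
        = M.submatrix Fin.succ Fin.castSucc := by
      ext i j
      simp [Matrix.updateRow_ne (Fin.succ_ne_zero i)]
    rw [hsub]
    exact mul_ne_zero (pow_ne_zero _ (by norm_num)) hlowdet
  have hUlast : U (Fin.last N) j0 ≠ 0 := by
    intro h0
    apply hadj0
    rw [hentry, h0, zero_mul, zero_mul]
  rw [hφ]
  have hA : J.submatrix Fin.castSucc Fin.castSucc
      = Matrix.of (fun i j => (d i.castSucc)⁻¹
          * (P.submatrix Fin.castSucc Fin.castSucc) i j * d j.castSucc) := by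
    ext i j
    simp [hJ]
  have hdetA : (lam k • (1 : Matrix (Fin N) (Fin N) ℝ)
        - P.submatrix Fin.castSucc Fin.castSucc).det
      = g j0 * (U (Fin.last N) j0) ^ 2 := by
    rw [← conj_det19 (P.submatrix Fin.castSucc Fin.castSucc) (fun i => d i.castSucc)
      (fun i => hdne _) (lam k), ← hA, ← hlastlast, hentry]
    ring
  rw [hdetA]
  have hppos : (0 : ℝ) < ∏ i : Fin N, P i.castSucc i.succ :=
    Finset.prod_pos (fun i _ => hp i)
  have hU2 : 0 < (U (Fin.last N) j0) ^ 2 := pow_two_pos_of_ne_zero hUlast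
  have hrearr : (-1 : ℝ) ^ (k : ℕ)
        * ((∏ i : Fin N, P i.castSucc i.succ)⁻¹ * (g j0 * (U (Fin.last N) j0) ^ 2))
      = ((∏ i : Fin N, P i.castSucc i.succ)⁻¹ * (U (Fin.last N) j0) ^ 2)
        * ((-1 : ℝ) ^ (k : ℕ) * g j0) := by
    ring
  rw [hrearr]
  exact mul_pos (mul_pos (inv_pos.mpr hppos) hU2) hsign
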